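/- Let W be uniformly distributed on a finite set of size M ≥ 2, let n ≥ 1, and let X₁, …, X_n, Y₁, …, Y_n be random variables with values in finite sets such that for each i: (a) X_i = e_i(W, Y₁, …, Y_{i−1}) almost surely for deterministic functions e_i, and (b) Y_i is conditionally independent of W given (X_i, Y₁, …, Y_{i−1}). Let Ŵ = d(Y₁, …, Y_n) for a deterministic decoding function d, and let P_e = P(Ŵ ≠ W). Then log₂ M ≤ Σ_{i=1}^n I(X_i ; Y_i | Y₁, …, Y_{i−1}) + h_b(P_e) + P_e · log₂ M. -/

import Mathlib

open MeasureTheory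

/-- The probability of a set, as a real number. -/
noncomputable def prob {Ω : Type*} [MeasurableSpace Ω] (μ : Measure Ω) (s : Set Ω) : ℝ :=
  (μ s).toReal

/-- Conditional Shannon entropy (base 2) `H(U | V)`. -/
noncomputable def condEntropy {Ω A B : Type*} [MeasurableSpace Ω] [Fintype A] [Fintype B]
    (μ : Measure Ω) (U : Ω → A) (V : Ω → B) : ℝ :=
  ∑ v : B, ∑ u : A,
    -(prob μ (U ⁻¹' {u} ∩ V ⁻¹' {v})) *
      Real.logb 2 (prob μ (U ⁻¹' {u} ∩ V ⁻¹' {v}) / prob μ (V ⁻¹' {v}))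

/-- Conditional mutual information `I(X ; Y | Z) = H(X|Z) + H(Y|Z) - H(X,Y|Z)`. -/
noncomputable def condMutInfo {Ω A B C : Type*} [MeasurableSpace Ω]
    [Fintype A] [Fintype B] [Fintype C]
    (μ : Measure Ω) (X : Ω → A) (Y : Ω → B) (Z : Ω → C) : ℝ :=
  condEntropy μ X Z + condEntropy μ Y Z - condEntropy μ (fun ω => (X ω, Y ω)) Z

/-- The vector of past outputs `Y^{i-1} = (Y_0, …, Y_{i-1})` before time `i`. -/
def past {Ω 𝒴 : Type*} {n : ℕ} (Y : Fin n → Ω → 𝒴) (i : Fin n) (ω : Ω) : Fin i → 𝒴 :=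
  fun j => Y (j.castLT (j.isLt.trans i.isLt)) ω

/-- The binary entropy function (base 2). -/
noncomputable def binEnt (q : ℝ) : ℝ :=
  -q * Real.logb 2 q - (1 - q) * Real.logb 2 (1 - q)


set_option linter.unusedSectionVars false
set_option maxHeartbeats 1000000
open MeasureTheory Real

section LogSum

lemma log_sum_ineq {ι : Type*} [Fintype ι] (a b : ι → ℝ) (ha : ∀ i, 0 ≤ a i)
    (hb : ∀ i, 0 ≤ b i) (hab : ∀ i, b i = 0 → a i = 0) :
    (∑ i, a i) * Real.log ((∑ i, a i) / (∑ i, b i)) ≤ ∑ i, a i * Real.log (a i / b i) := by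
  set A := ∑ i, a i with hA
  set B := ∑ i, b i with hB
  by_cases hB0 : B = 0
  · have hb0 : ∀ i, b i = 0 := by
      intro i
      exact (Finset.sum_eq_zero_iff_of_nonneg (fun i _ => hb i)).1 hB0 i (Finset.mem_univ i)
    have ha0 : ∀ i, a i = 0 := fun i => hab i (hb0 i)
    simp [hA, hB, ha0]
  · have hBpos : 0 < B := lt_of_le_of_ne (Finset.sum_nonneg fun i _ => hb i) (Ne.symm hB0)
    set w := fun i => b i / B with hw
    set p := fun i => if b i = 0 then 0 else a i / b i with hp
    have h₀ : ∀ i ∈ Finset.univ, 0 ≤ w i := fun i _ => div_nonneg (hb i) hBpos.le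
    have h₁ : ∑ i, w i = 1 := by
      rw [hw]; rw [← Finset.sum_div]; exact div_self hB0
    have hmem : ∀ i ∈ Finset.univ, p i ∈ Set.Ici (0:ℝ) := by
      intro i _
      simp only [hp, Set.mem_Ici]
      split
      · exact le_refl 0
      · exact div_nonneg (ha i) (hb i)
    have hwp : ∀ i, w i • p i = a i / B := by
      intro i
      by_cases hbi : b i = 0
      · simp [hp, hw, hbi, hab i hbi]
      · simp only [hp, hw, if_neg hbi, smul_eq_mul]
        field_simp
    have hsum : ∑ i, w i • p i = A / B := by
      simp only [hwp]; rw [← Finset.sum_div]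
    have jensen := Real.convexOn_mul_log.map_sum_le h₀ h₁ hmem
    rw [hsum] at jensen
    have hrhs : ∀ i, w i • (p i * Real.log (p i)) = (a i * Real.log (a i / b i)) / B := by
      intro i
      by_cases hbi : b i = 0
      · simp [hp, hw, hbi, hab i hbi]
      · simp only [hp, hw, if_neg hbi, smul_eq_mul]
        field_simp
    have jensen2 : (A / B) * Real.log (A / B) ≤ (∑ i, a i * Real.log (a i / b i)) / B := by
      calc (A / B) * Real.log (A / B) ≤ ∑ i, w i • ((fun x => x * Real.log x) (p i)) := jensen
        _ = (∑ i, a i * Real.log (a i / b i)) / B := by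
            simp only [hrhs]; rw [← Finset.sum_div]
    have := mul_le_mul_of_nonneg_left jensen2 hBpos.le
    calc A * Real.log (A / B) = B * ((A / B) * Real.log (A / B)) := by field_simp
      _ ≤ B * ((∑ i, a i * Real.log (a i / b i)) / B) := this
      _ = ∑ i, a i * Real.log (a i / b i) := by field_simp

lemma logb_sum_ineq {ι : Type*} [Fintype ι] (a b : ι → ℝ) (ha : ∀ i, 0 ≤ a i)
    (hb : ∀ i, 0 ≤ b i) (hab : ∀ i, b i = 0 → a i = 0) :
    (∑ i, a i) * Real.logb 2 ((∑ i, a i) / (∑ i, b i)) ≤ ∑ i, a i * Real.logb 2 (a i / b i) := by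
  have h := log_sum_ineq a b ha hb hab
  have h2 : (0:ℝ) < Real.log 2 := Real.log_pos one_lt_two
  simp only [Real.logb, div_eq_mul_inv]
  calc (∑ i, a i) * (Real.log ((∑ i, a i) * (∑ i, b i)⁻¹) * (Real.log 2)⁻¹)
      = ((∑ i, a i) * Real.log ((∑ i, a i) / (∑ i, b i))) * (Real.log 2)⁻¹ := by
        rw [div_eq_mul_inv]; ring
    _ ≤ (∑ i, a i * Real.log (a i / b i)) * (Real.log 2)⁻¹ := by
        apply mul_le_mul_of_nonneg_right h (by positivity)
    _ = ∑ i, a i * (Real.log (a i * (b i)⁻¹) * (Real.log 2)⁻¹) := by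
        rw [Finset.sum_mul]; congr 1; ext i; rw [div_eq_mul_inv]; ring

end LogSum

section EntropyLemmas
variable {Ω : Type*} [MeasurableSpace Ω] (μ : Measure Ω) [IsProbabilityMeasure μ]

lemma prob_nonneg' (s : Set Ω) : 0 ≤ prob μ s := ENNReal.toReal_nonneg

lemma prob_mono' {s t : Set Ω} (h : s ⊆ t) : prob μ s ≤ prob μ t :=
  ENNReal.toReal_mono (measure_ne_top μ t) (measure_mono h)

lemma prob_congr' {s t : Set Ω} (h : s = t) : prob μ s = prob μ t := by rw [h]

lemma sum_prob_inter {A : Type*} [Fintype A] (U : Ω → A)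
    (hU : ∀ a, MeasurableSet (U ⁻¹' {a})) {s : Set Ω} (hs : MeasurableSet s) :
    ∑ a : A, prob μ (U ⁻¹' {a} ∩ s) = prob μ s := by
  have hcover : s = ⋃ a : A, U ⁻¹' {a} ∩ s := by ext ω; simp
  have hdisj : Pairwise (Function.onFun Disjoint fun a : A => U ⁻¹' {a} ∩ s) := by
    intro a a' haa'
    apply Set.disjoint_left.2
    rintro ω ⟨h1, _⟩ ⟨h2, _⟩
    exact haa' (h1.symm.trans h2)
  symm
  calc prob μ s = (μ (⋃ a : A, U ⁻¹' {a} ∩ s)).toReal := by rw [prob, ← hcover]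
    _ = (∑ a : A, μ (U ⁻¹' {a} ∩ s)).toReal := by
        rw [measure_iUnion hdisj (fun a => (hU a).inter hs), tsum_fintype]
    _ = ∑ a : A, prob μ (U ⁻¹' {a} ∩ s) := by
        rw [ENNReal.toReal_sum (fun a _ => measure_ne_top μ _)]; rfl

/-- pointwise identity for the chain rule -/
lemma chain_term {p3 pvz pz : ℝ} (h3 : 0 ≤ p3) (h1 : p3 ≤ pvz) (h2 : pvz ≤ pz) :
    -p3 * Real.logb 2 (p3 / pz)
      = -p3 * Real.logb 2 (pvz / pz) + -p3 * Real.logb 2 (p3 / pvz) := by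
  rcases eq_or_lt_of_le h3 with h | h
  · simp [← h]
  · have hvz : 0 < pvz := lt_of_lt_of_le h h1
    have hz : 0 < pz := lt_of_lt_of_le hvz h2
    rw [Real.logb_div h.ne' hz.ne', Real.logb_div hvz.ne' hz.ne',
      Real.logb_div h.ne' hvz.ne']
    ring

lemma condEntropy_chain {A B C : Type*} [Fintype A] [Fintype B] [Fintype C]
    (U : Ω → A) (V : Ω → B) (Z : Ω → C)
    (hU : ∀ a, MeasurableSet (U ⁻¹' {a})) (hV : ∀ b, MeasurableSet (V ⁻¹' {b}))
    (hZ : ∀ c, MeasurableSet (Z ⁻¹' {c})) :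
    condEntropy μ (fun ω => (U ω, V ω)) Z
      = condEntropy μ V Z + condEntropy μ U (fun ω => (V ω, Z ω)) := by
  have hpUV : ∀ (u : A) (v : B), (fun ω => (U ω, V ω)) ⁻¹' {(u, v)}
      = U ⁻¹' {u} ∩ V ⁻¹' {v} := by
    intro u v; ext ω; simp [Prod.ext_iff]
  have hpVZ : ∀ (v : B) (z : C), (fun ω => (V ω, Z ω)) ⁻¹' {(v, z)}
      = V ⁻¹' {v} ∩ Z ⁻¹' {z} := by
    intro v z; ext ω; simp [Prod.ext_iff]
  unfold condEntropy
  simp only [Fintype.sum_prod_type, hpUV, hpVZ]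
  simp only [Set.inter_assoc]
  have key : ∀ (z : C) (v : B),
      (∑ u : A, -prob μ (U ⁻¹' {u} ∩ (V ⁻¹' {v} ∩ Z ⁻¹' {z})) *
        Real.logb 2 (prob μ (U ⁻¹' {u} ∩ (V ⁻¹' {v} ∩ Z ⁻¹' {z})) / prob μ (Z ⁻¹' {z})))
      = -prob μ (V ⁻¹' {v} ∩ Z ⁻¹' {z}) *
          Real.logb 2 (prob μ (V ⁻¹' {v} ∩ Z ⁻¹' {z}) / prob μ (Z ⁻¹' {z}))
        + ∑ u : A, -prob μ (U ⁻¹' {u} ∩ (V ⁻¹' {v} ∩ Z ⁻¹' {z})) *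
            Real.logb 2 (prob μ (U ⁻¹' {u} ∩ (V ⁻¹' {v} ∩ Z ⁻¹' {z})) /
              prob μ (V ⁻¹' {v} ∩ Z ⁻¹' {z})) := by
    intro z v
    have hPvz : ∑ u : A, prob μ (U ⁻¹' {u} ∩ (V ⁻¹' {v} ∩ Z ⁻¹' {z}))
        = prob μ (V ⁻¹' {v} ∩ Z ⁻¹' {z}) :=
      sum_prob_inter μ U hU ((hV v).inter (hZ z))
    calc ∑ u : A, -prob μ (U ⁻¹' {u} ∩ (V ⁻¹' {v} ∩ Z ⁻¹' {z})) *
          Real.logb 2 (prob μ (U ⁻¹' {u} ∩ (V ⁻¹' {v} ∩ Z ⁻¹' {z})) / prob μ (Z ⁻¹' {z}))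
        = ∑ u : A, (-prob μ (U ⁻¹' {u} ∩ (V ⁻¹' {v} ∩ Z ⁻¹' {z})) *
            Real.logb 2 (prob μ (V ⁻¹' {v} ∩ Z ⁻¹' {z}) / prob μ (Z ⁻¹' {z}))
          + -prob μ (U ⁻¹' {u} ∩ (V ⁻¹' {v} ∩ Z ⁻¹' {z})) *
            Real.logb 2 (prob μ (U ⁻¹' {u} ∩ (V ⁻¹' {v} ∩ Z ⁻¹' {z})) /
              prob μ (V ⁻¹' {v} ∩ Z ⁻¹' {z}))) := by
          apply Finset.sum_congr rfl
          intro u _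
          exact chain_term (prob_nonneg' μ _)
            (prob_mono' μ Set.inter_subset_right)
            (prob_mono' μ Set.inter_subset_right)
      _ = (∑ u : A, -prob μ (U ⁻¹' {u} ∩ (V ⁻¹' {v} ∩ Z ⁻¹' {z}))) *
            Real.logb 2 (prob μ (V ⁻¹' {v} ∩ Z ⁻¹' {z}) / prob μ (Z ⁻¹' {z}))
          + ∑ u : A, -prob μ (U ⁻¹' {u} ∩ (V ⁻¹' {v} ∩ Z ⁻¹' {z})) *
            Real.logb 2 (prob μ (U ⁻¹' {u} ∩ (V ⁻¹' {v} ∩ Z ⁻¹' {z})) /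
              prob μ (V ⁻¹' {v} ∩ Z ⁻¹' {z})) := by
          rw [Finset.sum_add_distrib, Finset.sum_mul]
      _ = _ := by rw [Finset.sum_neg_distrib, hPvz]
  calc ∑ z : C, ∑ u : A, ∑ v : B,
        -prob μ (U ⁻¹' {u} ∩ (V ⁻¹' {v} ∩ Z ⁻¹' {z})) *
          Real.logb 2 (prob μ (U ⁻¹' {u} ∩ (V ⁻¹' {v} ∩ Z ⁻¹' {z})) / prob μ (Z ⁻¹' {z}))
      = ∑ z : C, ∑ v : B, ∑ u : A,
        -prob μ (U ⁻¹' {u} ∩ (V ⁻¹' {v} ∩ Z ⁻¹' {z})) *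
          Real.logb 2 (prob μ (U ⁻¹' {u} ∩ (V ⁻¹' {v} ∩ Z ⁻¹' {z})) / prob μ (Z ⁻¹' {z})) := by
        exact Finset.sum_congr rfl fun z _ => Finset.sum_comm
    _ = ∑ z : C, ∑ v : B,
        (-prob μ (V ⁻¹' {v} ∩ Z ⁻¹' {z}) *
          Real.logb 2 (prob μ (V ⁻¹' {v} ∩ Z ⁻¹' {z}) / prob μ (Z ⁻¹' {z}))
        + ∑ u : A, -prob μ (U ⁻¹' {u} ∩ (V ⁻¹' {v} ∩ Z ⁻¹' {z})) *
            Real.logb 2 (prob μ (U ⁻¹' {u} ∩ (V ⁻¹' {v} ∩ Z ⁻¹' {z})) /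
              prob μ (V ⁻¹' {v} ∩ Z ⁻¹' {z}))) := by
        exact Finset.sum_congr rfl fun z _ => Finset.sum_congr rfl fun v _ => key z v
    _ = _ := by
        simp only [Finset.sum_add_distrib]
        congr 1
        exact Finset.sum_comm

lemma term_nonneg {p q : ℝ} (hp : 0 ≤ p) (hpq : p ≤ q) : 0 ≤ -p * Real.logb 2 (p / q) := by
  rcases eq_or_lt_of_le hp with h | h
  · simp [← h]
  · have hq : 0 < q := lt_of_lt_of_le h hpq
    have h1 : p / q ≤ 1 := (div_le_one hq).2 hpq
    have := Real.logb_nonpos (x := p / q) one_lt_two (by positivity) h1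
    nlinarith

lemma neg_mul_logb_self_div (p : ℝ) : -p * Real.logb 2 (p / p) = 0 := by
  rcases eq_or_ne p 0 with h | h
  · simp [h]
  · rw [div_self h, Real.logb_one, mul_zero]

lemma condEntropy_nonneg {A B : Type*} [Fintype A] [Fintype B] (U : Ω → A) (V : Ω → B) :
    0 ≤ condEntropy μ U V := by
  apply Finset.sum_nonneg
  intro v _
  apply Finset.sum_nonneg
  intro u _
  exact term_nonneg (prob_nonneg' μ _) (prob_mono' μ Set.inter_subset_right)

lemma condEntropy_comp_equiv_left {A A' B : Type*} [Fintype A] [Fintype A'] [Fintype B]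
    (g : A ≃ A') (U : Ω → A) (V : Ω → B) :
    condEntropy μ (fun ω => g (U ω)) V = condEntropy μ U V := by
  unfold condEntropy
  refine Finset.sum_congr rfl fun v _ => ?_
  refine (Fintype.sum_equiv g _ _ fun u => ?_).symm
  have : (fun ω => g (U ω)) ⁻¹' {g u} = U ⁻¹' {u} := by
    ext ω; simp
  rw [this]

lemma condEntropy_comp_equiv_right {A B B' : Type*} [Fintype A] [Fintype B] [Fintype B']
    (g : B ≃ B') (U : Ω → A) (V : Ω → B) :
    condEntropy μ U (fun ω => g (V ω)) = condEntropy μ U V := by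
  unfold condEntropy
  refine (Fintype.sum_equiv g _ _ fun v => ?_).symm
  have : (fun ω => g (V ω)) ⁻¹' {g v} = V ⁻¹' {v} := by
    ext ω; simp
  rw [this]

/-- conditioning on more reduces entropy -/
lemma condEntropy_pair_le {A B C : Type*} [Fintype A] [Fintype B] [Fintype C]
    (U : Ω → A) (V : Ω → B) (Z : Ω → C)
    (hU : ∀ a, MeasurableSet (U ⁻¹' {a})) (hV : ∀ b, MeasurableSet (V ⁻¹' {b}))
    (hZ : ∀ c, MeasurableSet (Z ⁻¹' {c})) :
    condEntropy μ U (fun ω => (V ω, Z ω)) ≤ condEntropy μ U Z := by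
  have hpVZ : ∀ (v : B) (z : C), (fun ω => (V ω, Z ω)) ⁻¹' {(v, z)}
      = V ⁻¹' {v} ∩ Z ⁻¹' {z} := by
    intro v z; ext ω; simp [Prod.ext_iff]
  unfold condEntropy
  simp only [Fintype.sum_prod_type, hpVZ]
  rw [Finset.sum_comm]
  -- now LHS: ∑ z, ∑ v, ∑ u ; RHS: ∑ z, ∑ u
  refine Finset.sum_le_sum fun z _ => ?_
  rw [Finset.sum_comm]
  refine Finset.sum_le_sum fun u _ => ?_
  -- ∑ v, -p(u,v,z) logb (p(u,v,z)/p(v,z)) ≤ -p(u,z) logb (p(u,z)/p(z))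
  have key := logb_sum_ineq (fun v : B => prob μ (U ⁻¹' {u} ∩ (V ⁻¹' {v} ∩ Z ⁻¹' {z})))
    (fun v : B => prob μ (V ⁻¹' {v} ∩ Z ⁻¹' {z}))
    (fun v => prob_nonneg' μ _) (fun v => prob_nonneg' μ _)
    (fun v hv => le_antisymm (hv ▸ prob_mono' μ Set.inter_subset_right) (prob_nonneg' μ _))
  have ha : ∑ v : B, prob μ (U ⁻¹' {u} ∩ (V ⁻¹' {v} ∩ Z ⁻¹' {z}))
      = prob μ (U ⁻¹' {u} ∩ Z ⁻¹' {z}) := by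
    rw [← sum_prob_inter μ V hV ((hU u).inter (hZ z))]
    refine Finset.sum_congr rfl fun v _ => ?_
    congr 1
    ext ω; simp; tauto
  have hbsum : ∑ v : B, prob μ (V ⁻¹' {v} ∩ Z ⁻¹' {z}) = prob μ (Z ⁻¹' {z}) :=
    sum_prob_inter μ V hV (hZ z)
  rw [ha, hbsum] at key
  calc ∑ v : B, -prob μ (U ⁻¹' {u} ∩ (V ⁻¹' {v} ∩ Z ⁻¹' {z})) *
        Real.logb 2 (prob μ (U ⁻¹' {u} ∩ (V ⁻¹' {v} ∩ Z ⁻¹' {z})) / prob μ (V ⁻¹' {v} ∩ Z ⁻¹' {z}))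
      = -∑ v : B, prob μ (U ⁻¹' {u} ∩ (V ⁻¹' {v} ∩ Z ⁻¹' {z})) *
        Real.logb 2 (prob μ (U ⁻¹' {u} ∩ (V ⁻¹' {v} ∩ Z ⁻¹' {z})) / prob μ (V ⁻¹' {v} ∩ Z ⁻¹' {z})) := by
        rw [← Finset.sum_neg_distrib]
        exact Finset.sum_congr rfl fun v _ => by ring
    _ ≤ -(prob μ (U ⁻¹' {u} ∩ Z ⁻¹' {z}) *
        Real.logb 2 (prob μ (U ⁻¹' {u} ∩ Z ⁻¹' {z}) / prob μ (Z ⁻¹' {z}))) := by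
        exact neg_le_neg key
    _ = _ := by ring

/-- entropy of a subdistribution is at most (total mass) * log(card) -/
lemma inner_entropy_le {A : Type*} [Fintype A] (a : A → ℝ) (q : ℝ)
    (ha : ∀ u, 0 ≤ a u) (hq : ∑ u, a u = q) :
    ∑ u, -(a u) * Real.logb 2 (a u / q) ≤ q * Real.logb 2 (Fintype.card A) := by
  rcases isEmpty_or_nonempty A with hA | hA
  · have hq0 : q = 0 := by rw [← hq]; simp
    simp [hq0]
  rcases eq_or_lt_of_le (hq ▸ Finset.sum_nonneg fun u _ => ha u : (0:ℝ) ≤ q) with hq0 | hqpos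
  · have ha0 : ∀ u, a u = 0 := by
      intro u
      have := (Finset.sum_eq_zero_iff_of_nonneg (fun u _ => ha u)).1 (hq.trans hq0.symm)
      exact this u (Finset.mem_univ u)
    simp [ha0, ← hq0]
  · have hcard : (0:ℝ) < Fintype.card A := by
      have := Fintype.card_pos (α := A)
      exact_mod_cast this
    have key := logb_sum_ineq a (fun _ : A => q / Fintype.card A) ha
      (fun _ => by positivity)
      (fun u h => by
        exfalso
        have : q ≠ 0 := ne_of_gt hqpos
        have := div_ne_zero this (ne_of_gt hcard)
        exact this h)
    have hbsum : ∑ _u : A, q / (Fintype.card A : ℝ) = q := by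
      rw [Finset.sum_const, Finset.card_univ, nsmul_eq_mul]
      field_simp
    rw [hq, hbsum, div_self (ne_of_gt hqpos), Real.logb_one, mul_zero] at key
    have expand : ∀ u : A, a u * Real.logb 2 (a u / (q / Fintype.card A))
        = a u * Real.logb 2 (a u / q) + a u * Real.logb 2 (Fintype.card A) := by
      intro u
      rcases eq_or_lt_of_le (ha u) with h0 | h0
      · simp [← h0]
      · rw [div_div_eq_mul_div, ← div_mul_eq_mul_div,
          Real.logb_mul (by positivity) (ne_of_gt hcard), mul_add]
    rw [Finset.sum_congr rfl (fun u _ => expand u), Finset.sum_add_distrib,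
      ← Finset.sum_mul, hq] at key
    have : ∑ u, -(a u) * Real.logb 2 (a u / q) = -∑ u, a u * Real.logb 2 (a u / q) := by
      rw [← Finset.sum_neg_distrib]
      exact Finset.sum_congr rfl fun u _ => by ring
    rw [this]
    linarith

/-- conditional independence kills conditioning -/
lemma condEntropy_indep {A B C : Type*} [Fintype A] [Fintype B] [Fintype C]
    (U : Ω → A) (V : Ω → B) (Z : Ω → C)
    (hU : ∀ a, MeasurableSet (U ⁻¹' {a})) (hV : ∀ b, MeasurableSet (V ⁻¹' {b}))
    (hZ : ∀ c, MeasurableSet (Z ⁻¹' {c}))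
    (hfact : ∀ (a : A) (b : B) (c : C),
      prob μ (U ⁻¹' {a} ∩ (V ⁻¹' {b} ∩ Z ⁻¹' {c})) * prob μ (Z ⁻¹' {c})
        = prob μ (U ⁻¹' {a} ∩ Z ⁻¹' {c}) * prob μ (V ⁻¹' {b} ∩ Z ⁻¹' {c})) :
    condEntropy μ U (fun ω => (V ω, Z ω)) = condEntropy μ U Z := by
  have hpVZ : ∀ (v : B) (z : C), (fun ω => (V ω, Z ω)) ⁻¹' {(v, z)}
      = V ⁻¹' {v} ∩ Z ⁻¹' {z} := by
    intro v z; ext ω; simp [Prod.ext_iff]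
  unfold condEntropy
  simp only [Fintype.sum_prod_type, hpVZ]
  rw [Finset.sum_comm]
  refine Finset.sum_congr rfl fun z _ => ?_
  rw [Finset.sum_comm]
  refine Finset.sum_congr rfl fun u _ => ?_
  -- ∑ v, -p(u,v,z) logb(p(u,v,z)/p(v,z)) = -p(u,z) logb(p(u,z)/p(z))
  have step1 : ∀ v : B, -prob μ (U ⁻¹' {u} ∩ (V ⁻¹' {v} ∩ Z ⁻¹' {z})) *
        Real.logb 2 (prob μ (U ⁻¹' {u} ∩ (V ⁻¹' {v} ∩ Z ⁻¹' {z})) / prob μ (V ⁻¹' {v} ∩ Z ⁻¹' {z}))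
      = -prob μ (U ⁻¹' {u} ∩ (V ⁻¹' {v} ∩ Z ⁻¹' {z})) *
        Real.logb 2 (prob μ (U ⁻¹' {u} ∩ Z ⁻¹' {z}) / prob μ (Z ⁻¹' {z})) := by
    intro v
    rcases eq_or_lt_of_le (prob_nonneg' μ (U ⁻¹' {u} ∩ (V ⁻¹' {v} ∩ Z ⁻¹' {z}))) with h0 | h0
    · rw [← h0]; ring
    · have hvz : 0 < prob μ (V ⁻¹' {v} ∩ Z ⁻¹' {z}) :=
        lt_of_lt_of_le h0 (prob_mono' μ Set.inter_subset_right)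
      have hz : 0 < prob μ (Z ⁻¹' {z}) :=
        lt_of_lt_of_le hvz (prob_mono' μ Set.inter_subset_right)
      have huz : 0 < prob μ (U ⁻¹' {u} ∩ Z ⁻¹' {z}) := by
        by_contra h
        push_neg at h
        have h' : prob μ (U ⁻¹' {u} ∩ Z ⁻¹' {z}) = 0 :=
          le_antisymm h (prob_nonneg' μ _)
        have := hfact u v z
        rw [h', zero_mul] at this
        nlinarith
      have : prob μ (U ⁻¹' {u} ∩ (V ⁻¹' {v} ∩ Z ⁻¹' {z})) / prob μ (V ⁻¹' {v} ∩ Z ⁻¹' {z})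
          = prob μ (U ⁻¹' {u} ∩ Z ⁻¹' {z}) / prob μ (Z ⁻¹' {z}) := by
        rw [div_eq_div_iff (ne_of_gt hvz) (ne_of_gt hz)]
        have := hfact u v z
        linarith [hfact u v z]
      rw [this]
  have hmarg : ∑ v : B, prob μ (U ⁻¹' {u} ∩ (V ⁻¹' {v} ∩ Z ⁻¹' {z}))
      = prob μ (U ⁻¹' {u} ∩ Z ⁻¹' {z}) := by
    rw [← sum_prob_inter μ V hV ((hU u).inter (hZ z))]
    refine Finset.sum_congr rfl fun v _ => ?_
    congr 1
    ext ω; simp; tauto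
  rw [Finset.sum_congr rfl fun v _ => step1 v, ← Finset.sum_mul,
    Finset.sum_neg_distrib, hmarg]

end EntropyLemmas

def snocEquiv (k : ℕ) (α : Type*) : (Fin (k + 1) → α) ≃ α × (Fin k → α) where
  toFun v := (v (Fin.last k), fun j => v j.castSucc)
  invFun p := Fin.snoc (α := fun _ => α) p.2 p.1
  left_inv v := by
    funext j
    refine Fin.lastCases ?_ ?_ j
    · exact Fin.snoc_last _ _
    · intro j'
      exact Fin.snoc_castSucc _ _ _
  right_inv := fun ⟨a, f⟩ => by
    show (Fin.snoc (α := fun _ => α) f a (Fin.last k),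
      fun j => Fin.snoc (α := fun _ => α) f a (Fin.castSucc j)) = (a, f)
    simp only [Fin.snoc_last, Fin.snoc_castSucc]

def prodLeftComm (α β γ : Type*) : α × (β × γ) ≃ β × (α × γ) where
  toFun p := (p.2.1, (p.1, p.2.2))
  invFun p := (p.2.1, (p.1, p.2.2))
  left_inv p := rfl
  right_inv p := rfl

section Fano
lemma fano {Ω : Type*} [MeasurableSpace Ω] (μ : Measure Ω) [IsProbabilityMeasure μ]
    {A B : Type*} [Fintype A] [Fintype B]
    (Wv : Ω → A) (V : Ω → B) (d : B → A)
    (hWv : ∀ a, MeasurableSet (Wv ⁻¹' {a})) (hV : ∀ b, MeasurableSet (V ⁻¹' {b})) :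
    condEntropy μ Wv V ≤ binEnt (prob μ {ω | d (V ω) ≠ Wv ω})
      + prob μ {ω | d (V ω) ≠ Wv ω} * Real.logb 2 (Fintype.card A) := by
  classical
  set Pe := prob μ {ω | d (V ω) ≠ Wv ω} with hPe
  set E : Ω → Bool := fun ω => if d (V ω) = Wv ω then false else true with hE
  have hEtrue : E ⁻¹' {true} = {ω | d (V ω) ≠ Wv ω} := by
    ext ω; by_cases h : d (V ω) = Wv ω <;> simp [hE, h]
  have hEfalse : E ⁻¹' {false} = {ω | d (V ω) = Wv ω} := by
    ext ω; by_cases h : d (V ω) = Wv ω <;> simp [hE, h]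
  have hSm : MeasurableSet {ω | d (V ω) = Wv ω} := by
    have : {ω | d (V ω) = Wv ω} = ⋃ b : B, V ⁻¹' {b} ∩ Wv ⁻¹' {d b} := by
      ext ω
      simp only [Set.mem_setOf_eq, Set.mem_iUnion, Set.mem_inter_iff, Set.mem_preimage,
        Set.mem_singleton_iff]
      constructor
      · intro h; exact ⟨V ω, rfl, h.symm⟩
      · rintro ⟨b, rfl, h⟩; exact h.symm
    rw [this]
    exact MeasurableSet.iUnion fun b => (hV b).inter (hWv (d b))
  have hE' : ∀ b : Bool, MeasurableSet (E ⁻¹' {b}) := by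
    intro b
    cases b
    · rw [hEfalse]; exact hSm
    · rw [hEtrue]
      have : {ω | d (V ω) ≠ Wv ω} = {ω | d (V ω) = Wv ω}ᶜ := rfl
      rw [this]; exact hSm.compl
  have hPe_true : prob μ (E ⁻¹' {true}) = Pe := by rw [hEtrue]
  have hPe_false : prob μ (E ⁻¹' {false}) = 1 - Pe := by
    have hc : E ⁻¹' {false} = {ω | d (V ω) ≠ Wv ω}ᶜ := by
      rw [hEfalse]; ext ω; simp [Set.mem_compl_iff]
    have hs' : MeasurableSet {ω | d (V ω) ≠ Wv ω} := hSm.compl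
    rw [hc, prob, prob_compl_eq_one_sub hs',
      ENNReal.toReal_sub_of_le prob_le_one (by simp)]
    simp [hPe, prob]
  -- step 1-3
  have step1 : condEntropy μ Wv V ≤ condEntropy μ (fun ω => (E ω, Wv ω)) V := by
    rw [condEntropy_chain μ E Wv V hE' hWv hV]
    exact le_add_of_nonneg_right (condEntropy_nonneg μ _ _)
  have step2 : condEntropy μ (fun ω => (E ω, Wv ω)) V
      = condEntropy μ (fun ω => (Wv ω, E ω)) V := by
    exact (condEntropy_comp_equiv_left μ (Equiv.prodComm Bool A) (fun ω => (E ω, Wv ω)) V).symm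
  have step3 : condEntropy μ (fun ω => (Wv ω, E ω)) V
      = condEntropy μ E V + condEntropy μ Wv (fun ω => (E ω, V ω)) :=
    condEntropy_chain μ Wv E V hWv hE' hV
  -- step 4 : H(E|V) ≤ binEnt Pe
  set K : Ω → Unit := fun _ => () with hK
  have hK' : ∀ c : Unit, MeasurableSet (K ⁻¹' {c}) := by
    intro c
    convert MeasurableSet.univ
    ext ω
    simp [hK, eq_iff_true_of_subsingleton]
  have hKuniv : ∀ c : Unit, K ⁻¹' {c} = Set.univ := by
    intro c; ext ω; simp [hK, eq_iff_true_of_subsingleton]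
  have step4a : condEntropy μ E V = condEntropy μ E (fun ω => (V ω, K ω)) := by
    have h := condEntropy_comp_equiv_right μ (Equiv.prodPUnit B) E (fun ω => (V ω, K ω))
    have h2 : (fun ω => (Equiv.prodPUnit B) ((fun ω => (V ω, K ω)) ω)) = V := rfl
    rw [h2] at h
    linarith [h]
  have step4b : condEntropy μ E (fun ω => (V ω, K ω)) ≤ condEntropy μ E K :=
    condEntropy_pair_le μ E V K hE' hV hK'
  have step4c : condEntropy μ E K = binEnt Pe := by
    unfold condEntropy
    rw [Fintype.sum_unique]
    rw [Fintype.sum_bool]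
    rw [hKuniv]
    simp only [Set.inter_univ]
    have h1 : prob μ Set.univ = 1 := by simp [prob]
    rw [h1, hPe_true, hPe_false, div_one, div_one]
    unfold binEnt
    ring
  -- step 5 : H(W|(E,V)) ≤ Pe * log card
  have hpEV : ∀ (b : Bool) (v : B), (fun ω => (E ω, V ω)) ⁻¹' {(b, v)}
      = E ⁻¹' {b} ∩ V ⁻¹' {v} := by
    intro b v; ext ω; simp [Prod.ext_iff]
  have step5 : condEntropy μ Wv (fun ω => (E ω, V ω)) ≤ Pe * Real.logb 2 (Fintype.card A) := by
    unfold condEntropy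
    rw [Fintype.sum_prod_type]
    rw [Fintype.sum_bool]
    simp only [hpEV]
    have hfalse : ∑ v : B, ∑ w : A,
        -prob μ (Wv ⁻¹' {w} ∩ (E ⁻¹' {false} ∩ V ⁻¹' {v})) *
          Real.logb 2 (prob μ (Wv ⁻¹' {w} ∩ (E ⁻¹' {false} ∩ V ⁻¹' {v})) /
            prob μ (E ⁻¹' {false} ∩ V ⁻¹' {v})) = 0 := by
      refine Finset.sum_eq_zero fun v _ => Finset.sum_eq_zero fun w _ => ?_
      by_cases h : w = d v
      · have hset : Wv ⁻¹' {w} ∩ (E ⁻¹' {false} ∩ V ⁻¹' {v}) = E ⁻¹' {false} ∩ V ⁻¹' {v} := by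
          ext ω
          simp only [Set.mem_inter_iff, Set.mem_preimage, Set.mem_singleton_iff, hEfalse,
            Set.mem_setOf_eq]
          constructor
          · tauto
          · rintro ⟨h1, h2⟩
            exact ⟨by rw [h, ← h2, h1], h1, h2⟩
        rw [hset]
        exact neg_mul_logb_self_div _
      · have hset : Wv ⁻¹' {w} ∩ (E ⁻¹' {false} ∩ V ⁻¹' {v}) = ∅ := by
          ext ω
          simp only [Set.mem_inter_iff, Set.mem_preimage, Set.mem_singleton_iff, hEfalse,
            Set.mem_setOf_eq, Set.mem_empty_iff_false, iff_false, not_and]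
          intro h1 h2 h3
          exact h (by rw [← h1, ← h2, h3])
        rw [hset]
        simp [prob]
    have htrue : ∑ v : B, ∑ w : A,
        -prob μ (Wv ⁻¹' {w} ∩ (E ⁻¹' {true} ∩ V ⁻¹' {v})) *
          Real.logb 2 (prob μ (Wv ⁻¹' {w} ∩ (E ⁻¹' {true} ∩ V ⁻¹' {v})) /
            prob μ (E ⁻¹' {true} ∩ V ⁻¹' {v}))
        ≤ Pe * Real.logb 2 (Fintype.card A) := by
      have hstep : ∀ v : B, ∑ w : A,
          -prob μ (Wv ⁻¹' {w} ∩ (E ⁻¹' {true} ∩ V ⁻¹' {v})) *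
            Real.logb 2 (prob μ (Wv ⁻¹' {w} ∩ (E ⁻¹' {true} ∩ V ⁻¹' {v})) /
              prob μ (E ⁻¹' {true} ∩ V ⁻¹' {v}))
          ≤ prob μ (E ⁻¹' {true} ∩ V ⁻¹' {v}) * Real.logb 2 (Fintype.card A) := by
        intro v
        exact inner_entropy_le _ _ (fun w => prob_nonneg' μ _)
          (sum_prob_inter μ Wv hWv ((hE' true).inter (hV v)))
      calc _ ≤ ∑ v : B, prob μ (E ⁻¹' {true} ∩ V ⁻¹' {v}) * Real.logb 2 (Fintype.card A) :=
            Finset.sum_le_sum fun v _ => hstep v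
        _ = (∑ v : B, prob μ (V ⁻¹' {v} ∩ E ⁻¹' {true})) * Real.logb 2 (Fintype.card A) := by
            rw [Finset.sum_mul]
            exact Finset.sum_congr rfl fun v _ => by rw [Set.inter_comm]
        _ = Pe * Real.logb 2 (Fintype.card A) := by
            rw [sum_prob_inter μ V hV (hE' true), hPe_true]
    linarith
  linarith

end Fano

/-- **Fano-type converse for causal encoding with feedback.** If `W` is uniform on a
finite message set of size `M ≥ 2`, `X_i = e_i(W, Y^{i-1})` a.s., `Y_i` is conditionally
independent of `W` given `(X_i, Y^{i-1})`, `Ŵ = d(Y^n)` and `P_e = P(Ŵ ≠ W)`, then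
`log₂ M ≤ ∑ i, I(X_i ; Y_i | Y^{i-1}) + h_b(P_e) + P_e log₂ M`. -/
theorem stmt12 {Ω : Type*} [MeasurableSpace Ω] (μ : Measure Ω) [IsProbabilityMeasure μ]
    {𝒲 𝒳 𝒴 : Type*} [Fintype 𝒲] [Fintype 𝒳] [Fintype 𝒴]
    [MeasurableSpace 𝒲] [MeasurableSingletonClass 𝒲]
    [MeasurableSpace 𝒳] [MeasurableSingletonClass 𝒳]
    [MeasurableSpace 𝒴] [MeasurableSingletonClass 𝒴]
    (hM : 2 ≤ Fintype.card 𝒲)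
    (n : ℕ) (hn : 1 ≤ n)
    (W : Ω → 𝒲) (X : Fin n → Ω → 𝒳) (Y : Fin n → Ω → 𝒴)
    (hW : Measurable W) (hX : ∀ i, Measurable (X i)) (hY : ∀ i, Measurable (Y i))
    (hunif : ∀ w : 𝒲, μ (W ⁻¹' {w}) = (Fintype.card 𝒲 : ENNReal)⁻¹)
    (e : (i : Fin n) → 𝒲 × (Fin i → 𝒴) → 𝒳)
    (henc : ∀ i : Fin n, ∀ᵐ ω ∂μ, X i ω = e i (W ω, past Y i ω))
    (hCI : ∀ (i : Fin n) (y : 𝒴) (w : 𝒲) (x : 𝒳) (yp : Fin i → 𝒴),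
      0 < prob μ ((X i) ⁻¹' {x} ∩ (past Y i) ⁻¹' {yp}) →
      prob μ ((Y i) ⁻¹' {y} ∩ W ⁻¹' {w} ∩ (X i) ⁻¹' {x} ∩ (past Y i) ⁻¹' {yp}) /
          prob μ ((X i) ⁻¹' {x} ∩ (past Y i) ⁻¹' {yp}) =
        (prob μ ((Y i) ⁻¹' {y} ∩ (X i) ⁻¹' {x} ∩ (past Y i) ⁻¹' {yp}) /
            prob μ ((X i) ⁻¹' {x} ∩ (past Y i) ⁻¹' {yp})) *
          (prob μ (W ⁻¹' {w} ∩ (X i) ⁻¹' {x} ∩ (past Y i) ⁻¹' {yp}) /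
            prob μ ((X i) ⁻¹' {x} ∩ (past Y i) ⁻¹' {yp})))
    (d : (Fin n → 𝒴) → 𝒲) (Pe : ℝ)
    (hPe : Pe = prob μ {ω | d (fun i => Y i ω) ≠ W ω}) :
    Real.logb 2 (Fintype.card 𝒲) ≤
      (∑ i : Fin n, condMutInfo μ (X i) (Y i) (past Y i)) +
        binEnt Pe + Pe * Real.logb 2 (Fintype.card 𝒲) := by
  classical
  have hnpos : 0 < n := hn
  set Yv : (k : ℕ) → Ω → (Fin k → 𝒴) :=
    fun k ω j => Y ⟨j % n, Nat.mod_lt _ hnpos⟩ ω with hYv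
  have hWMeas : ∀ w : 𝒲, MeasurableSet (W ⁻¹' {w}) :=
    fun w => hW (measurableSet_singleton _)
  have hXMeas : ∀ (i : Fin n) (x : 𝒳), MeasurableSet ((X i) ⁻¹' {x}) :=
    fun i x => hX i (measurableSet_singleton _)
  have hYMeas : ∀ (i : Fin n) (y : 𝒴), MeasurableSet ((Y i) ⁻¹' {y}) :=
    fun i y => hY i (measurableSet_singleton _)
  have hYvMeas : ∀ (k : ℕ) (v : Fin k → 𝒴), MeasurableSet ((Yv k) ⁻¹' {v}) := by
    intro k v
    have hset : (Yv k) ⁻¹' {v}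
        = ⋂ j : Fin k, (Y ⟨j % n, Nat.mod_lt _ hnpos⟩) ⁻¹' {v j} := by
      ext ω
      simp [hYv, funext_iff]
    rw [hset]
    exact MeasurableSet.iInter fun j => hY _ (measurableSet_singleton _)
  have hpast : ∀ i : Fin n, past Y i = Yv i.val := by
    intro i
    funext ω j
    simp only [past, hYv]
    congr 1
    exact Fin.ext (Nat.mod_eq_of_lt (j.isLt.trans i.isLt)).symm
  have hpastMeas : ∀ (i : Fin n) (yp : Fin i → 𝒴), MeasurableSet ((past Y i) ⁻¹' {yp}) := by
    intro i yp
    rw [hpast i]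
    exact hYvMeas _ _
  set g : ℕ → ℝ := fun k => condEntropy μ W (Yv k) with hg
  -- the vector of all outputs
  have hYvn : Yv n = fun ω (i : Fin n) => Y i ω := by
    funext ω j
    simp only [hYv]
    congr 1
    exact Fin.ext (Nat.mod_eq_of_lt j.isLt)
  have hMpos : (0:ℝ) < Fintype.card 𝒲 := by
    have : 0 < Fintype.card 𝒲 := by omega
    exact_mod_cast this
  -- value of g 0
  have hg0 : g 0 = Real.logb 2 (Fintype.card 𝒲) := by
    have hBuniv : (Yv 0) ⁻¹' {(default : Fin 0 → 𝒴)} = Set.univ := by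
      ext ω
      simp [Subsingleton.elim (Yv 0 ω) (default : Fin 0 → 𝒴)]
    have hpw : ∀ w : 𝒲, prob μ (W ⁻¹' {w}) = ((Fintype.card 𝒲 : ℝ))⁻¹ := by
      intro w
      rw [prob, hunif w, ENNReal.toReal_inv]
      simp
    show condEntropy μ W (Yv 0) = Real.logb 2 (Fintype.card 𝒲)
    unfold condEntropy
    rw [Fintype.sum_unique, hBuniv]
    simp only [Set.inter_univ]
    have h1 : prob μ (Set.univ : Set Ω) = 1 := by simp [prob]
    rw [h1]
    simp only [hpw, div_one, Real.logb_inv]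
    rw [Finset.sum_const, Finset.card_univ, nsmul_eq_mul]
    field_simp
  -- Fano bound on g n
  have hfano : g n ≤ binEnt Pe + Pe * Real.logb 2 (Fintype.card 𝒲) := by
    show condEntropy μ W (Yv n) ≤ _
    rw [hYvn]
    have hVmeas : ∀ v : Fin n → 𝒴, MeasurableSet ((fun ω (i : Fin n) => Y i ω) ⁻¹' {v}) := by
      rw [← hYvn]
      exact hYvMeas n
    have h := fano μ W (fun ω (i : Fin n) => Y i ω) d hWMeas hVmeas
    rw [← hPe] at h
    exact h
  -- per-step bound
  have hstep : ∀ i : Fin n, g i.val - g (i.val + 1)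
      ≤ condMutInfo μ (X i) (Y i) (past Y i) := by
    intro i
    have hZpM : ∀ c : Fin i → 𝒴, MeasurableSet ((past Y i) ⁻¹' {c}) := hpastMeas i
    have e1 : g i.val = condEntropy μ W (past Y i) := by
      show condEntropy μ W (Yv i.val) = _
      rw [hpast i]
    have hcomp : (fun ω => (snocEquiv i.val 𝒴) (Yv (i.val + 1) ω))
        = fun ω => (Y i ω, past Y i ω) := by
      funext ω
      refine Prod.ext ?_ ?_
      · show Yv (i.val + 1) ω (Fin.last i.val) = Y i ω
        have hidx : (⟨(Fin.last i.val).val % n, Nat.mod_lt _ hnpos⟩ : Fin n) = i :=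
          Fin.ext (by simp [Nat.mod_eq_of_lt i.isLt])
        show Y ⟨(Fin.last i.val).val % n, Nat.mod_lt _ hnpos⟩ ω = Y i ω
        rw [hidx]
      · show (fun j => Yv (i.val + 1) ω (Fin.castSucc j)) = past Y i ω
        rw [hpast i]
        funext j
        have hidx : (⟨(Fin.castSucc j).val % n, Nat.mod_lt _ hnpos⟩ : Fin n)
            = ⟨j.val % n, Nat.mod_lt _ hnpos⟩ := Fin.ext (by simp)
        show Y ⟨(Fin.castSucc j).val % n, Nat.mod_lt _ hnpos⟩ ω
          = Y ⟨j.val % n, Nat.mod_lt _ hnpos⟩ ω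
        rw [hidx]
    have e2 : g (i.val + 1) = condEntropy μ W (fun ω => (Y i ω, past Y i ω)) := by
      show condEntropy μ W (Yv (i.val + 1)) = _
      rw [← condEntropy_comp_equiv_right μ (snocEquiv i.val 𝒴) W (Yv (i.val + 1)), hcomp]
    have hA := condEntropy_chain μ W (Y i) (past Y i) hWMeas (hYMeas i) hZpM
    have hB := condEntropy_chain μ (Y i) W (past Y i) (hYMeas i) hWMeas hZpM
    have hswap1 : condEntropy μ (fun ω => (W ω, Y i ω)) (past Y i)
        = condEntropy μ (fun ω => (Y i ω, W ω)) (past Y i) :=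
      condEntropy_comp_equiv_left μ (Equiv.prodComm 𝒴 𝒲)
        (fun ω => (Y i ω, W ω)) (past Y i)
    have hC := condEntropy_chain μ (Y i) (X i) (past Y i) (hYMeas i) (hXMeas i) hZpM
    have hswap2 : condEntropy μ (fun ω => (X i ω, Y i ω)) (past Y i)
        = condEntropy μ (fun ω => (Y i ω, X i ω)) (past Y i) :=
      condEntropy_comp_equiv_left μ (Equiv.prodComm 𝒴 𝒳)
        (fun ω => (Y i ω, X i ω)) (past Y i)
    have hXZM : ∀ p : 𝒳 × (Fin i → 𝒴),
        MeasurableSet ((fun ω => (X i ω, past Y i ω)) ⁻¹' {p}) := by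
      intro p
      have hset : (fun ω => (X i ω, past Y i ω)) ⁻¹' {p}
          = (X i) ⁻¹' {p.1} ∩ (past Y i) ⁻¹' {p.2} := by
        ext ω; simp [Prod.ext_iff]
      rw [hset]; exact (hXMeas i p.1).inter (hZpM p.2)
    have hWZM : ∀ p : 𝒲 × (Fin i → 𝒴),
        MeasurableSet ((fun ω => (W ω, past Y i ω)) ⁻¹' {p}) := by
      intro p
      have hset : (fun ω => (W ω, past Y i ω)) ⁻¹' {p}
          = W ⁻¹' {p.1} ∩ (past Y i) ⁻¹' {p.2} := by
        ext ω; simp [Prod.ext_iff]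
      rw [hset]; exact (hWMeas p.1).inter (hZpM p.2)
    have hfact : ∀ (y : 𝒴) (w : 𝒲) (c : 𝒳 × (Fin i → 𝒴)),
        prob μ ((Y i) ⁻¹' {y} ∩ (W ⁻¹' {w} ∩ (fun ω => (X i ω, past Y i ω)) ⁻¹' {c}))
          * prob μ ((fun ω => (X i ω, past Y i ω)) ⁻¹' {c})
        = prob μ ((Y i) ⁻¹' {y} ∩ (fun ω => (X i ω, past Y i ω)) ⁻¹' {c})
          * prob μ (W ⁻¹' {w} ∩ (fun ω => (X i ω, past Y i ω)) ⁻¹' {c}) := by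
      rintro y w ⟨x, c⟩
      have hXZ : (fun ω => (X i ω, past Y i ω)) ⁻¹' {(x, c)}
          = (X i) ⁻¹' {x} ∩ (past Y i) ⁻¹' {c} := by
        ext ω; simp [Prod.ext_iff]
      rw [hXZ]
      have hs1 : (Y i) ⁻¹' {y} ∩ (W ⁻¹' {w} ∩ ((X i) ⁻¹' {x} ∩ (past Y i) ⁻¹' {c}))
          = (Y i) ⁻¹' {y} ∩ W ⁻¹' {w} ∩ (X i) ⁻¹' {x} ∩ (past Y i) ⁻¹' {c} := by
        ext ω; simp only [Set.mem_inter_iff]; tauto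
      have hs2 : (Y i) ⁻¹' {y} ∩ ((X i) ⁻¹' {x} ∩ (past Y i) ⁻¹' {c})
          = (Y i) ⁻¹' {y} ∩ (X i) ⁻¹' {x} ∩ (past Y i) ⁻¹' {c} := by
        ext ω; simp only [Set.mem_inter_iff]; tauto
      have hs3 : W ⁻¹' {w} ∩ ((X i) ⁻¹' {x} ∩ (past Y i) ⁻¹' {c})
          = W ⁻¹' {w} ∩ (X i) ⁻¹' {x} ∩ (past Y i) ⁻¹' {c} := by
        ext ω; simp only [Set.mem_inter_iff]; tauto
      rw [hs1, hs2, hs3]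
      rcases eq_or_lt_of_le (prob_nonneg' μ ((X i) ⁻¹' {x} ∩ (past Y i) ⁻¹' {c})) with h0 | h0
      · have h4 : prob μ (W ⁻¹' {w} ∩ (X i) ⁻¹' {x} ∩ (past Y i) ⁻¹' {c}) = 0 := by
          refine le_antisymm ?_ (prob_nonneg' μ _)
          rw [h0]
          exact prob_mono' μ (fun ω h => ⟨h.1.2, h.2⟩)
        rw [← h0, h4]
        ring
      · have h := hCI i y w x c h0
        have hBne : prob μ ((X i) ⁻¹' {x} ∩ (past Y i) ⁻¹' {c}) ≠ 0 := ne_of_gt h0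
        field_simp at h
        apply mul_right_cancel₀ hBne
        linear_combination (prob μ ((X i) ⁻¹' {x} ∩ (past Y i) ⁻¹' {c})) * h
    have hIndep := condEntropy_indep μ (Y i) W (fun ω => (X i ω, past Y i ω))
      (hYMeas i) hWMeas hXZM hfact
    have hmid : condEntropy μ (Y i) (fun ω => (W ω, (X i ω, past Y i ω)))
        = condEntropy μ (Y i) (fun ω => (X i ω, (W ω, past Y i ω))) :=
      condEntropy_comp_equiv_right μ (prodLeftComm 𝒳 𝒲 (Fin i → 𝒴)) (Y i)
        (fun ω => (X i ω, (W ω, past Y i ω)))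
    have hD := condEntropy_pair_le μ (Y i) (X i) (fun ω => (W ω, past Y i ω))
      (hYMeas i) (hXMeas i) hWZM
    have hMI : condMutInfo μ (X i) (Y i) (past Y i)
        = condEntropy μ (X i) (past Y i) + condEntropy μ (Y i) (past Y i)
          - condEntropy μ (fun ω => (X i ω, Y i ω)) (past Y i) := rfl
    rw [e1, e2, hMI]
    linarith [hA, hB, hswap1, hC, hswap2, hIndep, hmid, hD]
  -- telescoping
  have htel : ∑ i : Fin n, (g i.val - g (i.val + 1)) = g 0 - g n := by
    rw [Fin.sum_univ_eq_sum_range (fun k => g k - g (k + 1)) n]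
    exact Finset.sum_range_sub' g n
  have hsum : g 0 - g n ≤ ∑ i : Fin n, condMutInfo μ (X i) (Y i) (past Y i) := by
    rw [← htel]
    exact Finset.sum_le_sum fun i _ => hstep i
  linarith
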